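/- Under the conditions 0 < |k| ≤ π and h = 1/N < 1/π, the minimum eigenvalue of the circulant matrix K†K, where K = D₁ + i k D₀ as above, equals k². -/

import Mathlib

open Matrix
open Fin.NatCast

set_option maxHeartbeats 1000000

namespace MinEig


noncomputable def eVec (N : ℕ) (m : Fin N) : Fin N → ℂ := fun i => if i = m then 1 else 0

lemma circulant_eVec_mulVec {N : ℕ} [NeZero N] (m : Fin N) (w : Fin N → ℂ) :
    circulant (eVec N m) *ᵥ w = fun i => w (i - m) := by
  funext i
  show ∑ j, circulant (eVec N m) i j * w j = _
  rw [Fintype.sum_eq_single (i - m)]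
  · rw [circulant_apply, eVec, sub_sub_cancel, if_pos rfl, one_mul]
  · intro j hj
    rw [circulant_apply, eVec, if_neg, zero_mul]
    intro hc
    exact hj (by rw [← hc, sub_sub_cancel])

lemma circulant_eVec_zero {N : ℕ} [NeZero N] : circulant (eVec N 0) = (1 : Matrix (Fin N) (Fin N) ℂ) := by
  ext i j
  simp [eVec, one_apply, sub_eq_zero]

lemma shift_pow {N : ℕ} [NeZero N] (m : ℕ) :
    circulant (eVec N 1) ^ m = circulant (eVec N (m : Fin N)) := by
  induction m with
  | zero => simpa using circulant_eVec_zero.symm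
  | succ m ih =>
    rw [pow_succ, ih, circulant_mul, circulant_eVec_mulVec]
    apply congrArg
    funext i
    simp only [eVec, Nat.cast_add, Nat.cast_one]
    by_cases hc : i = (m : Fin N) + 1
    · rw [if_pos (by rw [hc, add_sub_cancel_left]), if_pos hc]
    · rw [if_neg, if_neg hc]
      intro hc2
      exact hc (by rw [sub_eq_iff_eq_add.mp hc2, add_comm])

lemma circulant_eVec_ones {N : ℕ} [NeZero N] (m : Fin N) :
    circulant (eVec N m) *ᵥ (fun _ => (1:ℂ)) = fun _ => (1:ℂ) := by
  rw [circulant_eVec_mulVec]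

lemma mem_spectrum_of_mulVec {N : ℕ} (A : Matrix (Fin N) (Fin N) ℂ) (x : Fin N → ℂ) (μ : ℂ)
    (hx : x ≠ 0) (hAx : A *ᵥ x = μ • x) : μ ∈ spectrum ℂ A := by
  rw [spectrum.mem_iff]
  intro hu
  have hM : (algebraMap ℂ (Matrix (Fin N) (Fin N) ℂ) μ - A) *ᵥ x = 0 := by
    rw [Matrix.sub_mulVec, Algebra.algebraMap_eq_smul_one, Matrix.smul_mulVec,
      Matrix.one_mulVec, hAx, sub_self]
  obtain ⟨u, hu'⟩ := hu
  apply hx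
  calc x = 1 *ᵥ x := (Matrix.one_mulVec x).symm
    _ = ((↑u⁻¹ : Matrix (Fin N) (Fin N) ℂ) * ↑u) *ᵥ x := by rw [u.inv_mul]
    _ = (↑u⁻¹ : Matrix (Fin N) (Fin N) ℂ) *ᵥ (↑u *ᵥ x) := (Matrix.mulVec_mulVec x _ _).symm
    _ = 0 := by rw [hu', hM, Matrix.mulVec_zero]


set_option maxHeartbeats 1000000 in
lemma key_trig (h k u : ℝ) (hk : |k| ≤ Real.pi) (hh0 : 0 < h) (hh : h < 1/Real.pi)
    (hu1 : Real.pi * h ≤ u) (hu2 : u ≤ Real.pi - Real.pi * h) :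
    (2*k/h) * Real.cos u ≤ (2/h^2 - k^2/2) * Real.sin u := by
  have hπ := Real.pi_pos
  have hπ3 := Real.pi_gt_three
  obtain ⟨x, hxdef⟩ : ∃ x : ℝ, Real.pi * h = x := ⟨_, rfl⟩
  rw [hxdef] at hu1 hu2
  have hx0 : 0 < x := by rw [← hxdef]; exact mul_pos hπ hh0
  have hx1 : x < 1 := by
    rw [← hxdef]
    have e : Real.pi * (1/Real.pi) = 1 := by field_simp
    have := mul_lt_mul_of_pos_left hh hπ
    linarith
  have hxlt : x < Real.pi/2 := by linarith
  have hcx : 0 < Real.cos x := Real.cos_pos_of_mem_Ioo ⟨by linarith, hxlt⟩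
  have hsx : 0 < Real.sin x := Real.sin_pos_of_pos_of_lt_pi hx0 (by linarith)
  have hsu : 0 < Real.sin u := Real.sin_pos_of_pos_of_lt_pi (lt_of_lt_of_le hx0 hu1) (by linarith)
  have h1 : 0 ≤ Real.sin (u - x) := Real.sin_nonneg_of_nonneg_of_le_pi (by linarith) (by linarith)
  have h2 : 0 ≤ Real.sin (u + x) := Real.sin_nonneg_of_nonneg_of_le_pi (by linarith) (by linarith)
  rw [Real.sin_sub] at h1
  rw [Real.sin_add] at h2
  have habs : |Real.cos u| * Real.sin x ≤ Real.sin u * Real.cos x := by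
    rcases abs_cases (Real.cos u) with ⟨he, _⟩ | ⟨he, _⟩ <;> rw [he] <;> nlinarith
  -- tan bounds
  have ht1 : Real.tan (x/2) < 1 := by
    rw [← Real.tan_pi_div_four]
    exact Real.tan_lt_tan_of_nonneg_of_lt_pi_div_two (by positivity) (by linarith) (by linarith)
  have ht2 : x/2 < Real.tan (x/2) := Real.lt_tan (by positivity) (by linarith)
  have ht0 : 0 < Real.tan (x/2) := lt_trans (by positivity) ht2
  have htx : Real.tan x = 2*Real.tan (x/2) / (1 - Real.tan (x/2)^2) := by
    rw [← Real.tan_two_mul]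
    congr 1
    ring
  have hb1 : 4*x/(4-x^2) ≤ Real.tan x := by
    rw [htx]
    set t := Real.tan (x/2)
    rw [div_le_div_iff₀ (by nlinarith) (by nlinarith)]
    nlinarith [mul_nonneg (by nlinarith : (0:ℝ) ≤ 2*t - x) (by nlinarith : (0:ℝ) ≤ 2 + x*t)]
  have hkh : |k| * h ≤ x := by rw [← hxdef]; exact mul_le_mul_of_nonneg_right hk hh0.le
  have hkh0 : 0 ≤ |k| * h := mul_nonneg (abs_nonneg k) hh0.le
  have hkh1 : |k| * h < 1 := lt_of_le_of_lt hkh hx1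
  have hd1 : (0:ℝ) < 4 - (|k| * h)^2 := by nlinarith [hkh0, hkh1]
  have hd2 : (0:ℝ) < 4 - x^2 := by nlinarith [hx0, hx1]
  have hb2 : 4*(|k| * h)/(4-(|k| * h)^2) ≤ 4*x/(4-x^2) := by
    rw [div_le_div_iff₀ hd1 hd2]
    nlinarith [mul_nonneg (by linarith : (0:ℝ) ≤ x - |k| * h) (by nlinarith [hkh0, hx0] : (0:ℝ) ≤ 4 + (|k| * h)*x)]
  have hA : 0 < 2/h^2 - k^2/2 := by
    have h2' : k^2*h^2 < 1 := by nlinarith [sq_abs k]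
    have hden : 0 < h^2 := by positivity
    rw [sub_pos, div_lt_div_iff₀ (by norm_num) hden]
    nlinarith
  have hmain : 2*|k|/h ≤ (2/h^2 - k^2/2) * Real.tan x := by
    have hne : (4 : ℝ) - (|k| * h)^2 ≠ 0 := ne_of_gt hd1
    have e1 : (2/h^2 - k^2/2) * (4*(|k| * h)/(4-(|k| * h)^2)) = 2*|k|/h := by
      have hsq : (|k| * h)^2 = k^2*h^2 := by rw [mul_pow, sq_abs]
      rw [hsq] at hne ⊢
      rw [div_sub_div _ _ (by positivity) two_ne_zero, div_mul_div_comm, div_eq_div_iff (mul_ne_zero (by positivity) hne) hh0.ne']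
      ring
    calc 2*|k|/h = (2/h^2 - k^2/2) * (4*(|k| * h)/(4-(|k| * h)^2)) := e1.symm
      _ ≤ (2/h^2 - k^2/2) * (4*x/(4-x^2)) := mul_le_mul_of_nonneg_left hb2 hA.le
      _ ≤ (2/h^2 - k^2/2) * Real.tan x := mul_le_mul_of_nonneg_left hb1 hA.le
  have h5 : (2*|k|/h) * Real.cos x ≤ (2/h^2 - k^2/2) * Real.sin x := by
    rw [Real.tan_eq_sin_div_cos] at hmain
    have := mul_le_mul_of_nonneg_right hmain hcx.le
    calc (2*|k|/h) * Real.cos x ≤ (2/h^2 - k^2/2) * (Real.sin x / Real.cos x) * Real.cos x := this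
      _ = (2/h^2 - k^2/2) * Real.sin x := by field_simp
  have hstep1 : (2*k/h) * Real.cos u ≤ (2*|k|/h) * |Real.cos u| := by
    calc (2*k/h) * Real.cos u ≤ |(2*k/h) * Real.cos u| := le_abs_self _
      _ = (2*|k|/h) * |Real.cos u| := by
          rw [abs_mul, abs_div, abs_mul, abs_of_pos hh0, abs_two]
  have hknn : 0 ≤ 2*|k|/h := by positivity
  have final : ((2*k/h) * Real.cos u) * Real.sin x ≤ ((2/h^2 - k^2/2) * Real.sin u) * Real.sin x := by
    calc ((2*k/h) * Real.cos u) * Real.sin x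
        ≤ ((2*|k|/h) * |Real.cos u|) * Real.sin x := mul_le_mul_of_nonneg_right hstep1 hsx.le
      _ = (2*|k|/h) * (|Real.cos u| * Real.sin x) := by ring
      _ ≤ (2*|k|/h) * (Real.sin u * Real.cos x) := mul_le_mul_of_nonneg_left habs hknn
      _ = ((2*|k|/h) * Real.cos x) * Real.sin u := by ring
      _ ≤ ((2/h^2 - k^2/2) * Real.sin x) * Real.sin u := mul_le_mul_of_nonneg_right h5 hsu.le
      _ = ((2/h^2 - k^2/2) * Real.sin u) * Real.sin x := by ring
  exact le_of_mul_le_mul_right final hsx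
lemma normSq_bound (h k s c : ℝ) (hh0 : h ≠ 0) (hpy : s^2 + c^2 = 1)
    (hkey : (2*k/h) * c ≤ (2/h^2 - k^2/2) * s) (hs : 0 ≤ s) :
    k^2 ≤ (1/h*(1-(1-2*s^2)) - k*(2*s*c)/2)^2 + (k/2*(1+(1-2*s^2)) - (2*s*c)/h)^2 := by
  have P : 0 ≤ s * ((2/h^2 - k^2/2) * s - (2*k/h) * c) := mul_nonneg hs (by linarith)
  have hEq : (1/h*(1-(1-2*s^2)) - k*(2*s*c)/2)^2 + (k/2*(1+(1-2*s^2)) - (2*s*c)/h)^2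
      = k^2 + 2*(s*((2/h^2 - k^2/2)*s - (2*k/h)*c)) + (4/h^2 + k^2)*s^2*(s^2 + c^2 - 1) := by
    field_simp
    ring
  rw [hEq, hpy]
  nlinarith [P]


end MinEig


/-- Under 0 < |k| ≤ π and h = 1/N < 1/π, the minimum eigenvalue of K†K,
where K = D₁ + i k D₀, equals k². -/
theorem min_eigenvalue_KdaggerK (N : ℕ) (h k : ℝ)
    (hk0 : 0 < |k|) (hkpi : |k| ≤ Real.pi)
    (hhN : h = 1 / N) (hh : h < 1 / Real.pi) (hh0 : 0 < h)
    (D1 D0 K : Matrix (Fin N) (Fin N) ℂ)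
    (hD1 : D1 = Matrix.circulant
      (fun i : Fin N => if i.val = 0 then (1 / h : ℂ) else if i.val = 1 then -(1 / h : ℂ) else 0))
    (hD0 : D0 = Matrix.circulant
      (fun i : Fin N => if i.val = 0 then (1 / 2 : ℂ) else if i.val = 1 then (1 / 2 : ℂ) else 0))
    (hK : K = D1 + ((k : ℂ) * Complex.I) • D0)
    (hH : (Kᴴ * K).IsHermitian) :
    IsLeast (Set.range hH.eigenvalues) (k ^ 2) := by
  have hπ := Real.pi_pos
  have hNne : N ≠ 0 := by
    intro h0
    subst h0
    rw [Nat.cast_zero, div_zero] at hhN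
    rw [hhN] at hh0
    norm_num at hh0
  haveI : NeZero N := ⟨hNne⟩
  have hNN : (0:ℝ) < N := by positivity
  have hNpi : Real.pi < (N:ℝ) := by
    rw [hhN, div_lt_div_iff₀ hNN hπ, one_mul] at hh
    simpa using hh
  have hN2 : 2 ≤ N := by
    have h3 : (3:ℝ) < (N:ℝ) := lt_trans Real.pi_gt_three hNpi
    have : (3:ℕ) < N := by exact_mod_cast h3
    omega
  have hhne : h ≠ 0 := ne_of_gt hh0
  have hone : ((1 : Fin N) : Fin N).val = 1 := by
    rw [Fin.val_one']
    exact Nat.mod_eq_of_lt hN2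
  set S : Matrix (Fin N) (Fin N) ℂ := circulant (MinEig.eVec N 1) with hS
  set α : ℂ := ((1/h : ℝ) : ℂ) + ((k/2 : ℝ) : ℂ) * Complex.I with hα
  set β : ℂ := ((k/2 : ℝ) : ℂ) * Complex.I - ((1/h : ℝ) : ℂ) with hβ
  -- K = α • 1 + β • S
  have hKS : K = α • (1 : Matrix (Fin N) (Fin N) ℂ) + β • S := by
    rw [hK, hD1, hD0]
    ext i j
    simp only [Matrix.add_apply, Matrix.smul_apply, Matrix.circulant_apply, Matrix.one_apply,
      smul_eq_mul, hS, MinEig.eVec]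
    by_cases hij : i = j
    · have hd0 : i - j = 0 := by rw [hij, sub_self]
      have hd0v : (i - j).val = 0 := by rw [hd0, Fin.val_zero]
      have hne1 : ¬ (i - j = (1 : Fin N)) := by
        rw [hd0]
        intro hc
        have := congrArg Fin.val hc
        rw [Fin.val_zero, hone] at this
        norm_num at this
      rw [if_pos hd0v, if_pos hd0v, if_pos hij, if_neg hne1, hα]
      push_cast
      ring
    · have hd0 : i - j ≠ 0 := fun hc => hij (sub_eq_zero.mp hc)
      have hne0 : (i - j).val ≠ 0 := fun hc => hd0 (Fin.ext (by rw [hc, Fin.val_zero]))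
      rw [if_neg hne0, if_neg hne0, if_neg hij]
      by_cases h1 : i - j = (1 : Fin N)
      · have h1v : (i - j).val = 1 := by rw [h1, hone]
        rw [if_pos h1v, if_pos h1v, if_pos h1, hβ]
        push_cast
        ring
      · have h1v : (i - j).val ≠ 1 := fun hc => h1 (Fin.ext (by rw [hc, hone]))
        rw [if_neg h1v, if_neg h1v, if_neg h1]
        ring
  -- Sᴴ = S ^ (N-1)
  have hSop : Sᴴ = S ^ (N-1) := by
    rw [hS, conjTranspose_circulant, MinEig.shift_pow]
    apply congrArg
    funext i
    have hc : ((N-1 : ℕ) : Fin N) = -1 := by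
      rw [eq_neg_iff_add_eq_zero]
      have : ((N-1 : ℕ) : Fin N) + 1 = ((N - 1 + 1 : ℕ) : Fin N) := by ext; simp [Fin.val_add]
      rw [this, Nat.sub_add_cancel (Nat.one_le_iff_ne_zero.mpr hNne), Fin.natCast_self]
    simp only [Pi.star_apply, MinEig.eVec, apply_ite (star : ℂ → ℂ), star_one, star_zero, hc]
    by_cases hi : i = -1
    · rw [if_pos (by rw [hi, neg_neg]), if_pos hi]
    · rw [if_neg (fun hc2 => hi (neg_eq_iff_eq_neg.mp hc2)), if_neg hi]
  -- Kᴴ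
  obtain ⟨α', hα'⟩ : ∃ x : ℂ, (starRingEnd ℂ) α = x := ⟨_, rfl⟩
  obtain ⟨β', hβ'⟩ : ∃ x : ℂ, (starRingEnd ℂ) β = x := ⟨_, rfl⟩
  have hKHS : Kᴴ = α' • (1 : Matrix (Fin N) (Fin N) ℂ) + β' • S ^ (N-1) := by
    rw [hKS, conjTranspose_add, conjTranspose_smul, conjTranspose_smul, conjTranspose_one, hSop,
      ← hα', ← hβ']
    rfl
  -- the polynomial
  set p : Polynomial ℂ := (Polynomial.C α' + Polynomial.C β' * Polynomial.X ^ (N-1))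
      * (Polynomial.C α + Polynomial.C β * Polynomial.X) with hp
  have hAp : (Polynomial.aeval S) p = Kᴴ * K := by
    rw [hp]
    simp only [_root_.map_mul, _root_.map_add, _root_.map_pow, Polynomial.aeval_C,
      Polynomial.aeval_X]
    rw [hKHS, hKS]
    simp only [Algebra.algebraMap_eq_smul_one, smul_mul_assoc, one_mul]
  -- the all-ones eigenvector
  set ones : Fin N → ℂ := fun _ => 1 with hons
  have hones : ones ≠ 0 := by
    intro hc
    have := congrFun hc ⟨0, Nat.pos_of_ne_zero hNne⟩
    simp [hons] at this
  have hSones : S *ᵥ ones = ones := MinEig.circulant_eVec_ones 1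
  have hSmones : S ^ (N-1) *ᵥ ones = ones := by
    rw [MinEig.shift_pow]
    exact MinEig.circulant_eVec_ones _
  have hKones : K *ᵥ ones = ((k : ℂ) * Complex.I) • ones := by
    rw [hKS, add_mulVec, smul_mulVec, smul_mulVec, one_mulVec, hSones, ← add_smul]
    congr 1
    rw [hα, hβ]
    push_cast
    ring
  have hKHones : Kᴴ *ᵥ ones = ((starRingEnd ℂ) ((k : ℂ) * Complex.I)) • ones := by
    rw [hKHS, add_mulVec, smul_mulVec, smul_mulVec, one_mulVec, hSmones, ← add_smul]
    rw [← hα', ← hβ', ← _root_.map_add]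
    congr 1
    rw [hα, hβ]
    push_cast
    ring
  have hkk : ((starRingEnd ℂ) ((k : ℂ) * Complex.I)) * ((k : ℂ) * Complex.I) = ((k:ℂ))^2 := by
    rw [_root_.map_mul, Complex.conj_I, Complex.conj_ofReal]
    have := Complex.I_mul_I
    ring_nf
    rw [Complex.I_sq]
    ring
  have hAones : (Kᴴ * K) *ᵥ ones = ((k:ℂ))^2 • ones := by
    rw [← Matrix.mulVec_mulVec, hKones, Matrix.mulVec_smul, hKHones, smul_smul, mul_comm, hkk]
  have h1mem : (1:ℂ) ∈ spectrum ℂ S := MinEig.mem_spectrum_of_mulVec S ones 1 hones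
    (by rw [hSones, one_smul])
  have hnon : (spectrum ℂ S).Nonempty := ⟨1, h1mem⟩
  constructor
  · -- k^2 is attained
    rw [← hH.spectrum_real_eq_range_eigenvalues]
    apply spectrum.of_algebraMap_mem ℂ
    have hcast : algebraMap ℝ ℂ (k^2) = ((k:ℂ))^2 := by
      rw [Complex.coe_algebraMap]
      push_cast
      ring
    rw [hcast]
    exact MinEig.mem_spectrum_of_mulVec _ ones _ hones hAones
  · -- lower bound
    rintro μ ⟨i, rfl⟩
    have hmem : ((hH.eigenvalues i : ℝ) : ℂ) ∈ spectrum ℂ (Kᴴ * K) := by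
      have h1 := hH.eigenvalues_mem_spectrum_real i
      have h2 := spectrum.algebraMap_mem ℂ h1
      rwa [Complex.coe_algebraMap] at h2
    have hmem2 : ((hH.eigenvalues i : ℝ) : ℂ) ∈ spectrum ℂ ((Polynomial.aeval S) p) := by
      rw [hAp]; exact hmem
    rw [spectrum.map_polynomial_aeval_of_nonempty S p hnon] at hmem2
    obtain ⟨z, hzmem, hev⟩ := hmem2
    have hzN : z^N = 1 := by
      have h' : z^N ∈ spectrum ℂ (S^N) := spectrum.pow_image_subset S N ⟨z, hzmem, rfl⟩
      rw [MinEig.shift_pow, Fin.natCast_self, MinEig.circulant_eVec_zero, spectrum.one_eq] at h'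
      exact h'
    obtain ⟨j, hjN, hj⟩ := (Complex.isPrimitiveRoot_exp N hNne).eq_pow_of_pow_eq_one hzN
    set θ : ℝ := 2*Real.pi*j/N with hθ
    have hzexp : z = Complex.exp ((θ:ℂ) * Complex.I) := by
      rw [← hj, ← Complex.exp_nat_mul]
      congr 1
      rw [hθ]
      push_cast
      have : (N:ℂ) ≠ 0 := by exact_mod_cast (Nat.cast_ne_zero (R := ℂ)).mpr hNne
      field_simp
    have hzre : z = ((Real.cos θ : ℝ) : ℂ) + ((Real.sin θ : ℝ) : ℂ) * Complex.I := by
      rw [hzexp, Complex.exp_mul_I, Complex.ofReal_cos, Complex.ofReal_sin]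
    have hz0 : z ≠ 0 := by
      intro hc
      rw [hc, zero_pow hNne] at hzN
      exact zero_ne_one hzN
    have habs1 : Complex.normSq z = 1 := by
      rw [Complex.normSq_eq_norm_sq, hzexp]
      have : (θ:ℂ) = ((θ:ℝ):ℂ) := rfl
      rw [Complex.norm_exp_ofReal_mul_I]
      norm_num
    have hconj : z^(N-1) = (starRingEnd ℂ) z := by
      apply mul_left_cancel₀ hz0
      rw [← pow_succ', Nat.sub_add_cancel (Nat.one_le_iff_ne_zero.mpr hNne), hzN,
        Complex.mul_conj, habs1]
      norm_num
    have hval : ((hH.eigenvalues i : ℝ) : ℂ) = (starRingEnd ℂ) (α + β * z) * (α + β * z) := by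
      rw [← hev, hp]
      simp only [Polynomial.eval_mul, Polynomial.eval_add, Polynomial.eval_C, Polynomial.eval_pow,
        Polynomial.eval_X, hconj, ← hα', ← hβ', _root_.map_add, _root_.map_mul]
    have hμ : (hH.eigenvalues i : ℝ) = Complex.normSq (α + β * z) := by
      have h2 : ((hH.eigenvalues i : ℝ) : ℂ) = ((Complex.normSq (α + β * z) : ℝ) : ℂ) := by
        rw [hval, mul_comm, Complex.mul_conj]
      exact_mod_cast h2
    have hw : Complex.normSq (α + β * z)
        = (1/h*(1-Real.cos θ) - k*Real.sin θ/2)^2 + (k/2*(1+Real.cos θ) - Real.sin θ/h)^2 := by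
      rw [hzre, hα, hβ]
      simp only [Complex.normSq_apply, Complex.add_re, Complex.add_im, Complex.sub_re,
        Complex.sub_im, Complex.mul_re, Complex.mul_im, Complex.I_re, Complex.I_im,
        Complex.ofReal_re, Complex.ofReal_im]
      ring
    rw [hμ, hw]
    rcases Nat.eq_zero_or_pos j with hj0 | hj1
    · subst hj0
      have hθ0 : θ = 0 := by rw [hθ]; push_cast; ring
      rw [hθ0, Real.cos_zero, Real.sin_zero]
      ring_nf
      nlinarith []
    · -- j ≥ 1
      set u : ℝ := Real.pi * j / N with hu
      have hθu : θ = 2*u := by rw [hθ, hu]; ring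
      have hj1' : (1:ℝ) ≤ (j:ℝ) := by exact_mod_cast hj1
      have hjN' : (j:ℝ) ≤ (N:ℝ) - 1 := by
        have : j + 1 ≤ N := hjN
        have := (Nat.cast_le (α := ℝ)).mpr this
        push_cast at this
        linarith
      have hlo : Real.pi * h ≤ u := by
        rw [hhN, hu, mul_one_div]
        gcongr
        nlinarith
      have hhi : u ≤ Real.pi - Real.pi * h := by
        rw [hhN, hu, mul_one_div]
        rw [div_le_iff₀ hNN]
        have e : (Real.pi - Real.pi/(N:ℝ)) * N = Real.pi * ((N:ℝ) - 1) := by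
          field_simp
        rw [e]
        nlinarith
      have hsu_pos : 0 < Real.sin u :=
        Real.sin_pos_of_pos_of_lt_pi (lt_of_lt_of_le (mul_pos hπ hh0) hlo)
          (lt_of_le_of_lt hhi (by nlinarith [mul_pos hπ hh0]))
      have hkey := MinEig.key_trig h k u hkpi hh0 hh hlo hhi
      have hc2 : Real.cos θ = 1 - 2*Real.sin u^2 := by
        rw [hθu, Real.cos_two_mul']
        have := Real.sin_sq_add_cos_sq u
        linarith
      have hs2 : Real.sin θ = 2*Real.sin u*Real.cos u := by rw [hθu, Real.sin_two_mul]
      rw [hc2, hs2]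
      exact MinEig.normSq_bound h k (Real.sin u) (Real.cos u) hhne
        (Real.sin_sq_add_cos_sq u) hkey hsu_pos.le
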